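/- Let γ: x → y be a path in a graph X. Then there exist n ≥ 0, a simple path δ: x → y, and simple loops σ₁, …, σₙ, all with supp(c_δ) ⊆ supp(c_γ) and supp(c_{σᵢ}) ⊆ supp(c_γ), such that c_γ = c_δ + c_{σ₁} + ⋯ + c_{σₙ}. -/

import Mathlib

/-- A graph in the sense of Sunada's topological crystallography: a set of vertices,
a set of edges, source and target maps, and a fixed-point free involution sending
each edge to its inverse. -/
structure SunadaGraph where
  V : Type
  E : Type
  s : E → V
  t : E → V
  inv : E → E
  s_inv : ∀ e, s (inv e) = t e
  t_inv : ∀ e, t (inv e) = s e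
  inv_inv : ∀ e, inv (inv e) = e
  inv_ne : ∀ e, inv e ≠ e

namespace SunadaGraph

variable (X : SunadaGraph)

/-- `X.IsPath x y γ` : the word of edges `γ` is a path from `x` to `y` in `X`. -/
inductive IsPath : X.V → X.V → List X.E → Prop
  | nil (x : X.V) : IsPath x x []
  | cons (e : X.E) {y : X.V} {γ : List X.E} (h : IsPath (X.t e) y γ) :
      IsPath (X.s e) y (e :: γ)

/-- A graph is connected if any two vertices are joined by a path. -/
def Connected : Prop := ∀ x y : X.V, ∃ γ : List X.E, X.IsPath x y γ

/-- An edge is a bridge if there is no path from its target to its source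
avoiding both the edge and its inverse. -/
def IsBridge (e : X.E) : Prop :=
  ¬ ∃ γ : List X.E, X.IsPath (X.t e) (X.s e) γ ∧ e ∉ γ ∧ X.inv e ∉ γ

/-- The space `C₁(X,ℝ)` of real 1-chains: formal linear combinations of edges
with `e⁻¹ = -e`, realized as finitely supported functions `c : E → ℝ` with
`c(e⁻¹) = - c(e)`. -/
noncomputable def C1 : Submodule ℝ (X.E →₀ ℝ) where
  carrier := {c | ∀ e, c (X.inv e) = - c e}
  add_mem' := by
    intro a b ha hb e
    simp only [Finsupp.add_apply, ha e, hb e]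
    ring
  zero_mem' := by intro e; simp
  smul_mem' := by
    intro r c hc e
    simp only [Finsupp.smul_apply, hc e, smul_eq_mul]
    ring

/-- The 1-chain associated to a single edge. -/
noncomputable def edgeChain (e : X.E) : ↥X.C1 :=
  ⟨Finsupp.single e 1 - Finsupp.single (X.inv e) 1, by
    intro f
    classical
    have h1 : (e = X.inv f) ↔ (X.inv e = f) := by
      constructor
      · rintro rfl; exact X.inv_inv f
      · rintro rfl; exact (X.inv_inv e).symm
    have h2 : (X.inv e = X.inv f) ↔ (e = f) := by
      constructor
      · intro h
        have := congrArg X.inv h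
        rwa [X.inv_inv, X.inv_inv] at this
      · rintro rfl; rfl
    simp only [Finsupp.sub_apply, Finsupp.single_apply, h1, h2]
    ring⟩

/-- The 1-chain `c_γ` of a path `γ`. -/
noncomputable def pathChain (γ : List X.E) : ↥X.C1 := (γ.map X.edgeChain).sum

/-- The inner product on `C₁(X,ℝ)` for which the edges form an orthonormal basis
(with `e⁻¹` counting as the negative of `e`). -/
noncomputable def chainInner (c d : ↥X.C1) : ℝ :=
  (1/2) * ((c : X.E →₀ ℝ).sum fun e x => x * (d : X.E →₀ ℝ) e)

/-- The boundary of a 1-chain. -/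
noncomputable def boundary (c : ↥X.C1) : X.V →₀ ℝ :=
  (c : X.E →₀ ℝ).sum fun e x => x • (Finsupp.single (X.t e) (1:ℝ) - Finsupp.single (X.s e) 1)

/-- A 1-cycle is a 1-chain with vanishing boundary. -/
def IsCycle (c : ↥X.C1) : Prop := X.boundary c = 0

/-- An integral 1-chain: all coefficients are integers. -/
def IsIntegral (c : ↥X.C1) : Prop := ∀ e, ∃ n : ℤ, (c : X.E →₀ ℝ) e = (n : ℝ)

/-- The support of a 1-chain: the set of edges with positive coefficient. -/
def chainSupp (c : ↥X.C1) : Set X.E := {e | 0 < (c : X.E →₀ ℝ) e}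

/-- `p` is the orthogonal projection of `C₁(X,ℝ)` onto the space `Z₁(X,ℝ)` of 1-cycles:
it takes values in `Z₁(X,ℝ)` and `c - p c` is orthogonal to every 1-cycle. -/
def IsOrthoProj (p : ↥X.C1 → ↥X.C1) : Prop :=
  (∀ c, X.IsCycle (p c)) ∧ (∀ c z, X.IsCycle z → X.chainInner (c - p c) z = 0)

/-- Two paths from `x` to `y` are homologous if one can be obtained from the other
by repeatedly inserting or deleting subwords `e e⁻¹`, and/or replacing a subword
`στ` by `τσ` where `σ` and `τ` are loops based at the same vertex. -/
inductive Homologous : X.V → X.V → List X.E → List X.E → Prop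
  | refl {x y : X.V} (γ : List X.E) (h : X.IsPath x y γ) : Homologous x y γ γ
  | cancel {x y : X.V} (γ δ : List X.E) (e : X.E)
      (h : X.IsPath x y (γ ++ e :: X.inv e :: δ)) (h' : X.IsPath x y (γ ++ δ)) :
      Homologous x y (γ ++ e :: X.inv e :: δ) (γ ++ δ)
  | swap {x y : X.V} (γ σ τ δ : List X.E) (v : X.V)
      (hσ : X.IsPath v v σ) (hτ : X.IsPath v v τ)
      (h : X.IsPath x y (γ ++ (σ ++ (τ ++ δ))))
      (h' : X.IsPath x y (γ ++ (τ ++ (σ ++ δ)))) :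
      Homologous x y (γ ++ (σ ++ (τ ++ δ))) (γ ++ (τ ++ (σ ++ δ)))
  | symm {x y : X.V} {a b : List X.E} (h : Homologous x y a b) : Homologous x y b a
  | trans {x y : X.V} {a b c : List X.E} (h1 : Homologous x y a b)
      (h2 : Homologous x y b c) : Homologous x y a c

/-- A simple path: no vertex is visited twice. -/
def IsSimplePath (x y : X.V) (γ : List X.E) : Prop :=
  X.IsPath x y γ ∧ (x :: γ.map X.t).Nodup

/-- A simple loop based at `x`: a loop in which every vertex other than `x` occurs
at most once and `x` occurs only as the initial and final vertex. -/
def IsSimpleLoop (x : X.V) (γ : List X.E) : Prop :=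
  X.IsPath x x γ ∧ (x :: (γ.map X.t).dropLast).Nodup

/-- A reduced word: no subword of the form `e e⁻¹`. -/
def Reduced (γ : List X.E) : Prop := γ.Chain' (fun a b => b ≠ X.inv a)

/-- A spanning tree: a set of edges, closed under inversion, such that the spanning
subgraph it determines is connected and has no nonempty reduced loops. -/
def IsSpanningTree (S : Set X.E) : Prop :=
  (∀ e ∈ S, X.inv e ∈ S) ∧
  (∀ x y : X.V, ∃ γ : List X.E, X.IsPath x y γ ∧ ∀ e ∈ γ, e ∈ S) ∧
  (∀ (x : X.V) (γ : List X.E), X.IsPath x x γ → (∀ e ∈ γ, e ∈ S) → X.Reduced γ → γ = [])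

/-- The quotient of a set of 1-chains by the translation action of the
integral 1-cycles. -/
def transQuot (S : Set ↥X.C1) : Type :=
  Quot (fun a b : S => ∃ z : ↥X.C1, X.IsCycle z ∧ X.IsIntegral z ∧ (b : ↥X.C1) = (a : ↥X.C1) + z)

section PCD_Aux

variable {X : SunadaGraph}

lemma isPath_nil_iff {x y : X.V} : X.IsPath x y [] ↔ x = y := by
  constructor
  · rintro ⟨⟩; rfl
  · rintro rfl; exact .nil x

lemma isPath_cons_iff {x y : X.V} {e : X.E} {γ : List X.E} :
    X.IsPath x y (e :: γ) ↔ x = X.s e ∧ X.IsPath (X.t e) y γ := by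
  constructor
  · rintro ⟨⟩; exact ⟨rfl, by assumption⟩
  · rintro ⟨rfl, h⟩; exact .cons e h

lemma isPath_append {x y : X.V} {a b : List X.E} :
    X.IsPath x y (a ++ b) ↔ ∃ z, X.IsPath x z a ∧ X.IsPath z y b := by
  induction a generalizing x with
  | nil => simp [isPath_nil_iff]
  | cons e a ih => simp [isPath_cons_iff, ih, and_assoc]

lemma pathChain_nil : X.pathChain ([] : List X.E) = 0 := rfl

lemma pathChain_cons (e : X.E) (γ : List X.E) :
    X.pathChain (e :: γ) = X.edgeChain e + X.pathChain γ := by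
  simp [pathChain]

lemma pathChain_append (a b : List X.E) :
    X.pathChain (a ++ b) = X.pathChain a + X.pathChain b := by
  simp [pathChain]

lemma pathChain_flatten (ll : List (List X.E)) :
    X.pathChain ll.flatten = (ll.map X.pathChain).sum := by
  induction ll with
  | nil => rfl
  | cons a ll ih => simp [List.flatten_cons, pathChain_append, ih]

lemma edgeChain_inv (e : X.E) : X.edgeChain (X.inv e) = - X.edgeChain e := by
  apply Subtype.ext
  show (Finsupp.single (X.inv e) 1 - Finsupp.single (X.inv (X.inv e)) 1) = _
  rw [X.inv_inv]
  show _ = -(Finsupp.single e 1 - Finsupp.single (X.inv e) 1)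
  abel

end PCD_Aux

section Coeff

open Classical

lemma edgeChain_coeff (f e : X.E) :
    ((X.edgeChain f : X.E →₀ ℝ)) e
      = (if f = e then (1:ℝ) else 0) - (if X.inv f = e then 1 else 0) := by
  classical
  simp [edgeChain, Finsupp.single_apply]

lemma coeff_add (a b : ↥X.C1) (e : X.E) :
    ((a + b : ↥X.C1) : X.E →₀ ℝ) e = (a : X.E →₀ ℝ) e + (b : X.E →₀ ℝ) e := rfl

lemma coeff_nonneg_of_inv_not_mem {γ : List X.E} {e : X.E} (h : X.inv e ∉ γ) :
    0 ≤ ((X.pathChain γ : X.E →₀ ℝ)) e := by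
  classical
  induction γ with
  | nil => simp [pathChain_nil]
  | cons f γ ih =>
    have hf : f ≠ X.inv e := fun hh => h (hh ▸ List.mem_cons_self (a := f) (l := γ))
    have hinv : X.inv f ≠ e := by
      intro hh; exact hf (by rw [← hh, X.inv_inv])
    have h2 : X.inv e ∉ γ := fun hh => h (List.mem_cons_of_mem _ hh)
    rw [pathChain_cons, coeff_add, edgeChain_coeff]
    have := ih h2
    simp only [if_neg hinv]
    by_cases hfe : f = e <;> simp [hfe] <;> linarith

lemma coeff_pos_of_mem {γ : List X.E} {e : X.E} (h : X.inv e ∉ γ) (he : e ∈ γ) :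
    0 < ((X.pathChain γ : X.E →₀ ℝ)) e := by
  classical
  induction γ with
  | nil => simp at he
  | cons f γ ih =>
    have hf : f ≠ X.inv e := fun hh => h (hh ▸ List.mem_cons_self (a := f) (l := γ))
    have hinv : X.inv f ≠ e := by
      intro hh; exact hf (by rw [← hh, X.inv_inv])
    have h2 : X.inv e ∉ γ := fun hh => h (List.mem_cons_of_mem _ hh)
    rw [pathChain_cons, coeff_add, edgeChain_coeff]
    simp only [if_neg hinv]
    by_cases hfe : f = e
    · have := coeff_nonneg_of_inv_not_mem (X := X) (e := e) h2
      simp [hfe]; linarith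
    · have he2 : e ∈ γ := by
        rcases List.mem_cons.1 he with h' | h'
        · exact absurd h'.symm hfe
        · exact h'
      have := ih h2 he2
      simp [hfe]; linarith

lemma coeff_nonpos_of_not_mem {γ : List X.E} {e : X.E} (h : e ∉ γ) :
    ((X.pathChain γ : X.E →₀ ℝ)) e ≤ 0 := by
  classical
  induction γ with
  | nil => simp [pathChain_nil]
  | cons f γ ih =>
    have hf : f ≠ e := fun hh => h (hh ▸ List.mem_cons_self (a := f) (l := γ))
    have h2 : e ∉ γ := fun hh => h (List.mem_cons_of_mem _ hh)
    rw [pathChain_cons, coeff_add, edgeChain_coeff]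
    have := ih h2
    simp only [if_neg hf]
    by_cases hfe : X.inv f = e <;> simp [hfe] <;> linarith

end Coeff

lemma isPath_last {a : List X.E} {x z : X.V} {u : List X.V} {v : X.V}
    (h : X.IsPath x z a) (hm : a.map X.t = u ++ [v]) : z = v := by
  induction a generalizing x u with
  | nil => simp at hm
  | cons e a ih =>
    rw [isPath_cons_iff] at h
    cases u with
    | nil =>
      simp only [List.map_cons, List.nil_append, List.cons.injEq] at hm
      obtain ⟨h1, h2⟩ := hm
      have ha : a = [] := List.map_eq_nil_iff.1 h2
      subst ha
      rw [isPath_nil_iff] at *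
      rw [← h.2, h1]
    | cons w u' =>
      simp only [List.map_cons, List.cons_append, List.cons.injEq] at hm
      exact ih h.2 hm.2

/-- Every list is either nodup, or splits as `p ++ v :: s` with `p` nodup and `v ∈ p`. -/
lemma nodup_or_first_dup {α : Type} (l : List α) :
    l.Nodup ∨ ∃ p v s, l = p ++ v :: s ∧ p.Nodup ∧ v ∈ p := by
  classical
  induction l with
  | nil => exact Or.inl List.nodup_nil
  | cons a l ih =>
    rcases ih with hnd | ⟨p, v, s, rfl, hp, hv⟩
    · by_cases ha : a ∈ l
      · obtain ⟨l₁, l₂, rfl⟩ := List.append_of_mem ha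
        refine Or.inr ⟨a :: l₁, a, l₂, by simp, ?_, List.mem_cons_self⟩
        have h1 : l₁.Nodup := (List.nodup_append.1 hnd).1
        have h2 : a ∉ l₁ := by
          intro hh
          exact (List.nodup_append.1 hnd).2.2 a hh a List.mem_cons_self rfl
        exact List.nodup_cons.2 ⟨h2, h1⟩
      · exact Or.inl (List.nodup_cons.2 ⟨ha, hnd⟩)
    · by_cases ha : a ∈ p
      · obtain ⟨p₁, p₂, rfl⟩ := List.append_of_mem ha
        refine Or.inr ⟨a :: p₁, a, p₂ ++ v :: s, by simp, ?_, List.mem_cons_self⟩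
        have h1 : p₁.Nodup := (List.nodup_append.1 hp).1
        have h2 : a ∉ p₁ := by
          intro hh
          exact (List.nodup_append.1 hp).2.2 a hh a List.mem_cons_self rfl
        exact List.nodup_cons.2 ⟨h2, h1⟩
      · exact Or.inr ⟨a :: p, v, s, by simp, List.nodup_cons.2 ⟨ha, hp⟩,
          List.mem_cons_of_mem _ hv⟩

/-- if both `f` and `f⁻¹` occur in `w`, then `w` has shape `α ++ g :: μ ++ g⁻¹ :: β`
with `g ∈ {f, f⁻¹}`. -/
lemma exists_pair_split {w : List X.E} {f : X.E} (h1 : f ∈ w) (h2 : X.inv f ∈ w) :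
    ∃ g α μ β, w = α ++ g :: μ ++ X.inv g :: β := by
  obtain ⟨α, β, rfl⟩ := List.append_of_mem h1
  rcases List.mem_append.1 h2 with hα | hβ
  · obtain ⟨α', μ, rfl⟩ := List.append_of_mem hα
    refine ⟨X.inv f, α', μ, β, ?_⟩
    simp [X.inv_inv]
  · rcases List.mem_cons.1 hβ with hh | hβ
    · exact absurd hh (X.inv_ne f)
    · obtain ⟨μ, β', rfl⟩ := List.append_of_mem hβ
      exact ⟨f, α, μ, β', by simp⟩

/-- Operation 1: excise a cancelling pair within a single word, producing a loop. -/
lemma op1 {p q : X.V} {α μ β : List X.E} {g : X.E}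
    (h : X.IsPath p q (α ++ g :: μ ++ X.inv g :: β)) :
    X.IsPath p q (α ++ β) ∧ X.IsPath (X.t g) (X.t g) μ ∧
    X.pathChain (α ++ g :: μ ++ X.inv g :: β) = X.pathChain (α ++ β) + X.pathChain μ := by
  rw [isPath_append] at h
  obtain ⟨z, h1, h2⟩ := h
  rw [isPath_cons_iff, X.s_inv, X.t_inv] at h2
  obtain ⟨hz, hβ⟩ := h2
  rw [isPath_append] at h1
  obtain ⟨z', hα, h1⟩ := h1
  rw [isPath_cons_iff] at h1
  obtain ⟨hz', hμ⟩ := h1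
  subst hz hz'
  refine ⟨isPath_append.2 ⟨X.s g, hα, hβ⟩, hμ, ?_⟩
  simp only [pathChain_append, pathChain_cons, edgeChain_inv]
  abel

/-- Operation 2: merge a loop containing `g⁻¹` into a word containing `g`. -/
lemma op2 {x y v : X.V} {α₁ α₂ β₁ β₂ : List X.E} {g : X.E}
    (hA : X.IsPath x y (α₁ ++ g :: α₂)) (hB : X.IsPath v v (β₁ ++ X.inv g :: β₂)) :
    X.IsPath x y (α₁ ++ β₂ ++ β₁ ++ α₂) ∧
    X.pathChain (α₁ ++ β₂ ++ β₁ ++ α₂)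
      = X.pathChain (α₁ ++ g :: α₂) + X.pathChain (β₁ ++ X.inv g :: β₂) := by
  rw [isPath_append] at hA hB
  obtain ⟨z, hα₁, hA⟩ := hA
  obtain ⟨w, hβ₁, hB⟩ := hB
  rw [isPath_cons_iff] at hA hB
  obtain ⟨hz, hα₂⟩ := hA
  obtain ⟨hw, hβ₂⟩ := hB
  rw [X.s_inv] at hw
  rw [X.t_inv] at hβ₂
  subst hz hw
  constructor
  · rw [isPath_append]
    refine ⟨X.t g, ?_, hα₂⟩
    rw [isPath_append]
    refine ⟨v, isPath_append.2 ⟨X.s g, hα₁, hβ₂⟩, hβ₁⟩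
  · simp only [pathChain_append, pathChain_cons, edgeChain_inv]
    abel

lemma mem_loops_iff {L : List (X.V × List X.E)} {e : X.E} :
    e ∈ (L.map Prod.snd).flatten ↔ ∃ p ∈ L, e ∈ p.2 := by
  simp only [List.mem_flatten, List.mem_map]
  constructor
  · rintro ⟨l, ⟨p, hp, rfl⟩, hel⟩; exact ⟨p, hp, hel⟩
  · rintro ⟨p, hp, hel⟩; exact ⟨p.2, ⟨p, hp, rfl⟩, hel⟩

/-- Reduction of a system (path + loops) to a cancellation-free system. -/
lemma reduce {x y : X.V} : ∀ (N : ℕ) (δ₀ : List X.E) (L : List (X.V × List X.E)),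
    δ₀.length + (L.map fun p => p.2.length).sum ≤ N →
    X.IsPath x y δ₀ → (∀ p ∈ L, X.IsPath p.1 p.1 p.2) →
    ∃ (δ' : List X.E) (L' : List (X.V × List X.E)), X.IsPath x y δ' ∧ (∀ p ∈ L', X.IsPath p.1 p.1 p.2) ∧
      (∀ e ∈ δ' ++ (L'.map Prod.snd).flatten, X.inv e ∉ δ' ++ (L'.map Prod.snd).flatten) ∧
      X.pathChain δ' + ((L'.map fun p => X.pathChain p.2)).sum
        = X.pathChain δ₀ + ((L.map fun p => X.pathChain p.2)).sum := by
  intro N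
  induction N with
  | zero =>
    intro δ₀ L hlen hδ hL
    have h0 : δ₀ = [] := List.length_eq_zero_iff.1 (by omega)
    have h1 : ((L.map Prod.snd).flatten).length = 0 := by
      rw [List.length_flatten, List.map_map]
      have : (List.map (List.length ∘ Prod.snd) L).sum
          = (L.map fun p => p.2.length).sum := by
        congr 1
      omega
    have h2 : (L.map Prod.snd).flatten = [] := List.length_eq_zero_iff.1 h1
    refine ⟨δ₀, L, hδ, hL, ?_, rfl⟩
    intro e he
    rw [h0, h2] at he
    simp at he
  | succ N ih =>
    intro δ₀ L hlen hδ hL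
    by_cases hCF : ∀ e ∈ δ₀ ++ (L.map Prod.snd).flatten,
        X.inv e ∉ δ₀ ++ (L.map Prod.snd).flatten
    · exact ⟨δ₀, L, hδ, hL, hCF, rfl⟩
    push_neg at hCF
    obtain ⟨e, he, hie⟩ := hCF
    have key : ∃ (δ₁ : List X.E) (L₁ : List (X.V × List X.E)),
        δ₁.length + ((L₁.map fun p => p.2.length)).sum + 2
          ≤ δ₀.length + ((L.map fun p => p.2.length)).sum ∧
        X.IsPath x y δ₁ ∧ (∀ p ∈ L₁, X.IsPath p.1 p.1 p.2) ∧
        X.pathChain δ₁ + ((L₁.map fun p => X.pathChain p.2)).sum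
          = X.pathChain δ₀ + ((L.map fun p => X.pathChain p.2)).sum := by
      clear ih
      -- the "one edge in the path, the inverse in a loop" case, as a reusable fact
      have hBcase : ∀ f : X.E, f ∈ δ₀ → X.inv f ∈ (L.map Prod.snd).flatten →
          ∃ (δ₁ : List X.E) (L₁ : List (X.V × List X.E)),
          δ₁.length + ((L₁.map fun p => p.2.length)).sum + 2
            ≤ δ₀.length + ((L.map fun p => p.2.length)).sum ∧
          X.IsPath x y δ₁ ∧ (∀ p ∈ L₁, X.IsPath p.1 p.1 p.2) ∧
          X.pathChain δ₁ + ((L₁.map fun p => X.pathChain p.2)).sum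
            = X.pathChain δ₀ + ((L.map fun p => X.pathChain p.2)).sum := by
        intro f hf hif
        rw [mem_loops_iff] at hif
        obtain ⟨pq, hpq, hifl⟩ := hif
        obtain ⟨L₁, L₂, rfl⟩ := List.append_of_mem hpq
        obtain ⟨α₁, α₂, rfl⟩ := List.append_of_mem hf
        obtain ⟨β₁, β₂, hsnd⟩ := List.append_of_mem hifl
        have hB : X.IsPath pq.1 pq.1 (β₁ ++ X.inv f :: β₂) := hsnd ▸ hL pq hpq
        obtain ⟨hpath, hchain⟩ := op2 (X := X) hδ hB
        rw [← hsnd] at hchain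
        refine ⟨α₁ ++ β₂ ++ β₁ ++ α₂, L₁ ++ L₂, ?_, hpath, ?_, ?_⟩
        · have hlen2 : pq.2.length = β₁.length + β₂.length + 1 := by
            rw [hsnd]; simp; omega
          simp only [List.map_append, List.sum_append, List.map_cons, List.sum_cons,
            List.length_append, List.length_cons, hlen2]
          linarith
        · intro p hp
          rcases List.mem_append.1 hp with h' | h'
          · exact hL p (List.mem_append_left _ h')
          · exact hL p (List.mem_append_right _ (List.mem_cons_of_mem _ h'))
        · simp only [List.map_append, List.sum_append, List.map_cons, List.sum_cons]
          rw [hchain]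
          abel
      rcases List.mem_append.1 he with he1 | he1 <;>
        rcases List.mem_append.1 hie with hie1 | hie1
      · -- both in δ₀ : op1 on the path
        obtain ⟨g, α, μ, β, hsplit⟩ := exists_pair_split (X := X) he1 hie1
        subst hsplit
        obtain ⟨hpath, hμ, hchain⟩ := op1 (X := X) hδ
        refine ⟨α ++ β, (X.t g, μ) :: L, ?_, hpath, ?_, ?_⟩
        · simp only [List.map_cons, List.sum_cons, List.length_append, List.length_cons]
          linarith
        · intro p hp
          rcases List.mem_cons.1 hp with h' | h'
          · rw [h']; exact hμ
          · exact hL p h'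
        · simp only [List.map_cons, List.sum_cons]
          rw [hchain]
          abel
      · exact hBcase e he1 hie1
      · exact hBcase (X.inv e) hie1 (by rw [X.inv_inv]; exact he1)
      · -- both in loops
        rw [mem_loops_iff] at he1
        obtain ⟨p, hpL, hep⟩ := he1
        obtain ⟨L₁, L₂, rfl⟩ := List.append_of_mem hpL
        by_cases hip : X.inv e ∈ p.2
        · -- same loop: op1 on that loop
          obtain ⟨g, α, μ, β, hsplit⟩ := exists_pair_split (X := X) hep hip
          have hp : X.IsPath p.1 p.1 ((α ++ g :: μ) ++ X.inv g :: β) := hsplit ▸ hL p hpL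
          obtain ⟨hpath, hμ, hchain⟩ := op1 (X := X) hp
          rw [← hsplit] at hchain
          refine ⟨δ₀, (p.1, α ++ β) :: (X.t g, μ) :: (L₁ ++ L₂), ?_, hδ, ?_, ?_⟩
          · have hlen2 : p.2.length = α.length + μ.length + β.length + 2 := by
              rw [hsplit]; simp; omega
            simp only [List.map_append, List.sum_append, List.map_cons, List.sum_cons,
              List.length_append, hlen2]
            linarith
          · intro r hr
            rcases List.mem_cons.1 hr with h' | h'
            · rw [h']; exact hpath
            rcases List.mem_cons.1 h' with h'' | h''
            · rw [h'']; exact hμ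
            rcases List.mem_append.1 h'' with h3 | h3
            · exact hL r (List.mem_append_left _ h3)
            · exact hL r (List.mem_append_right _ (List.mem_cons_of_mem _ h3))
          · simp only [List.map_append, List.sum_append, List.map_cons, List.sum_cons]
            rw [hchain]
            abel
        · -- different loops: op2 merging loop q into loop p
          have hq' : ∃ q ∈ L₁ ++ L₂, X.inv e ∈ q.2 := by
            rw [mem_loops_iff] at hie1
            obtain ⟨q, hqL, hq2⟩ := hie1
            rcases List.mem_append.1 hqL with h' | h'
            · exact ⟨q, List.mem_append_left _ h', hq2⟩
            rcases List.mem_cons.1 h' with h'' | h''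
            · exact absurd (h'' ▸ hq2) hip
            · exact ⟨q, List.mem_append_right _ h'', hq2⟩
          obtain ⟨q, hqL, hq2⟩ := hq'
          obtain ⟨R₁, R₂, heq⟩ := List.append_of_mem hqL
          obtain ⟨α₁, α₂, hsplitp⟩ := List.append_of_mem hep
          obtain ⟨β₁, β₂, hsplitq⟩ := List.append_of_mem hq2
          have hploop : X.IsPath p.1 p.1 (α₁ ++ e :: α₂) := hsplitp ▸ hL p hpL
          have hqmem : q ∈ L₁ ++ p :: L₂ := by
            rcases List.mem_append.1 hqL with h' | h'
            · exact List.mem_append_left _ h'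
            · exact List.mem_append_right _ (List.mem_cons_of_mem _ h')
          have hqloop : X.IsPath q.1 q.1 (β₁ ++ X.inv e :: β₂) := hsplitq ▸ hL q hqmem
          obtain ⟨hpath, hchain⟩ := op2 (X := X) hploop hqloop
          rw [← hsplitp, ← hsplitq] at hchain
          refine ⟨δ₀, (p.1, α₁ ++ β₂ ++ β₁ ++ α₂) :: (R₁ ++ R₂), ?_, hδ, ?_, ?_⟩
          · have h1 : ((L₁ ++ L₂).map fun r => r.2.length).sum
                = ((R₁ ++ q :: R₂).map fun r => r.2.length).sum := by rw [heq]
            have hlp : p.2.length = α₁.length + α₂.length + 1 := by rw [hsplitp]; simp; omega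
            have hlq : q.2.length = β₁.length + β₂.length + 1 := by rw [hsplitq]; simp; omega
            simp only [List.map_append, List.sum_append, List.map_cons, List.sum_cons,
              List.length_append, hlp, hlq] at h1 ⊢
            linarith
          · intro r hr
            rcases List.mem_cons.1 hr with h' | h'
            · rw [h']; exact hpath
            have hr2 : r ∈ R₁ ++ q :: R₂ := by
              rcases List.mem_append.1 h' with h3 | h3
              · exact List.mem_append_left _ h3
              · exact List.mem_append_right _ (List.mem_cons_of_mem _ h3)
            rw [← heq] at hr2
            rcases List.mem_append.1 hr2 with h3 | h3
            · exact hL r (List.mem_append_left _ h3)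
            · exact hL r (List.mem_append_right _ (List.mem_cons_of_mem _ h3))
          · have h1 : ((L₁ ++ L₂).map fun r => X.pathChain r.2).sum
                = ((R₁ ++ q :: R₂).map fun r => X.pathChain r.2).sum := by rw [heq]
            simp only [List.map_append, List.sum_append, List.map_cons, List.sum_cons] at h1 ⊢
            have h2 : (R₁.map fun r => X.pathChain r.2).sum
                  + (R₂.map fun r => X.pathChain r.2).sum
                = ((L₁.map fun r => X.pathChain r.2).sum
                    + (L₂.map fun r => X.pathChain r.2).sum) - X.pathChain q.2 := by
              rw [h1]
              abel
            rw [hchain, h2]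
            abel
    obtain ⟨δ₁, L₁, hlen₁, hδ₁, hL₁, hchain₁⟩ := key
    obtain ⟨δ', L', a, b, c, d⟩ := ih δ₁ L₁ (by omega) hδ₁ hL₁
    exact ⟨δ', L', a, b, c, d.trans hchain₁⟩

/-- Loop erasure: every path decomposes as a simple path plus simple loops, all
made of edges of the original path, with chains adding up. -/
lemma loop_erasure : ∀ (N : ℕ) (γ : List X.E) (x y : X.V), γ.length ≤ N → X.IsPath x y γ →
    ∃ (δ : List X.E) (M : List (X.V × List X.E)),
      X.IsSimplePath x y δ ∧ (∀ p ∈ M, X.IsSimpleLoop p.1 p.2) ∧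
      (∀ e ∈ δ, e ∈ γ) ∧ (∀ p ∈ M, ∀ e ∈ p.2, e ∈ γ) ∧
      X.pathChain γ = X.pathChain δ + ((M.map fun p => X.pathChain p.2)).sum := by
  intro N
  induction N with
  | zero =>
    intro γ x y hlen hγ
    have h0 : γ = [] := List.length_eq_zero_iff.1 (by omega)
    subst h0
    exact ⟨[], [], ⟨hγ, by simp⟩, by simp, by simp, by simp, by simp [pathChain_nil]⟩
  | succ N ih =>
    intro γ x y hlen hγ
    by_cases hnd : (x :: γ.map X.t).Nodup
    · refine ⟨γ, [], ⟨hγ, hnd⟩, by simp, fun e he => he, by simp, by simp [pathChain_nil]⟩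
    rcases nodup_or_first_dup (x :: γ.map X.t) with h | ⟨p, v, s₀, hsplit, hp, hv⟩
    · exact absurd h hnd
    obtain ⟨p₁, p₂, rfl⟩ := List.append_of_mem hv
    have hndloop : (v :: p₂).Nodup := (List.nodup_append.1 hp).2.1
    have key : ∃ g₁ g₂ g₃, γ = g₁ ++ (g₂ ++ g₃) ∧ X.IsPath x v g₁ ∧ X.IsPath v v g₂ ∧
        X.IsPath v y g₃ ∧ g₂.map X.t = p₂ ++ [v] := by
      cases p₁ with
      | nil =>
        simp only [List.nil_append, List.cons_append, List.cons.injEq] at hsplit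
        obtain ⟨rfl, hmap⟩ := hsplit
        rw [show p₂ ++ x :: s₀ = (p₂ ++ [x]) ++ s₀ by simp] at hmap
        rw [List.map_eq_append_iff] at hmap
        obtain ⟨g₂, g₃, rfl, hm₂, hm₃⟩ := hmap
        rw [isPath_append] at hγ
        obtain ⟨z, h₂, h₃⟩ := hγ
        have hz := isPath_last (X := X) h₂ hm₂
        subst hz
        exact ⟨[], g₂, g₃, by simp, IsPath.nil _, h₂, h₃, hm₂⟩
      | cons w p₁' =>
        simp only [List.cons_append, List.cons.injEq] at hsplit
        obtain ⟨rfl, hmap⟩ := hsplit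
        rw [show (p₁' ++ v :: p₂) ++ v :: s₀ = (p₁' ++ [v]) ++ ((p₂ ++ [v]) ++ s₀) by simp]
          at hmap
        rw [List.map_eq_append_iff] at hmap
        obtain ⟨g₁, g', rfl, hm₁, hm'⟩ := hmap
        rw [List.map_eq_append_iff] at hm'
        obtain ⟨g₂, g₃, rfl, hm₂, hm₃⟩ := hm'
        rw [isPath_append] at hγ
        obtain ⟨z, h₁, h'⟩ := hγ
        have hz := isPath_last (X := X) h₁ hm₁
        subst hz
        rw [isPath_append] at h'
        obtain ⟨z', h₂, h₃⟩ := h'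
        have hz' := isPath_last (X := X) h₂ hm₂
        subst hz'
        exact ⟨g₁, g₂, g₃, rfl, h₁, h₂, h₃, hm₂⟩
    obtain ⟨g₁, g₂, g₃, hgam, h₁, h₂, h₃, hmap₂⟩ := key
    have hγ' : X.IsPath x y (g₁ ++ g₃) := isPath_append.2 ⟨v, h₁, h₃⟩
    have hg₂len : g₂.length = p₂.length + 1 := by
      have := congrArg List.length hmap₂
      simpa using this
    have hlen' : (g₁ ++ g₃).length ≤ N := by
      have := congrArg List.length hgam
      simp only [List.length_append] at this
      simp only [List.length_append]
      omega
    obtain ⟨δ, M, hδ, hM, hed, hedM, hchain⟩ := ih (g₁ ++ g₃) x y hlen' hγ'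
    refine ⟨δ, (v, g₂) :: M, hδ, ?_, ?_, ?_, ?_⟩
    · intro r hr
      rcases List.mem_cons.1 hr with h' | h'
      · rw [h']
        exact ⟨h₂, by rw [hmap₂, List.dropLast_concat]; exact hndloop⟩
      · exact hM r h'
    · intro e he
      have := hed e he
      rw [hgam]
      simp only [List.mem_append] at this ⊢
      tauto
    · intro r hr e he
      rcases List.mem_cons.1 hr with h' | h'
      · rw [h'] at he
        rw [hgam]
        simp only [List.mem_append]
        tauto
      · have := hedM r h' e he
        rw [hgam]
        simp only [List.mem_append] at this ⊢
        tauto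
    · rw [hgam]
      simp only [pathChain_append, List.map_cons, List.sum_cons]
      rw [pathChain_append] at hchain
      have hcomm : X.pathChain g₁ + (X.pathChain g₂ + X.pathChain g₃)
          = X.pathChain g₂ + (X.pathChain g₁ + X.pathChain g₃) := by abel
      rw [hcomm, hchain]
      abel

lemma isSimplePath_self_nil {v : X.V} {δ : List X.E} (h : X.IsSimplePath v v δ) :
    δ = [] := by
  cases δ with
  | nil => rfl
  | cons e δ' =>
    exfalso
    obtain ⟨hpath, hnd⟩ := h
    have hne : (e :: δ').map X.t ≠ [] := by simp
    have h1 : v = ((e :: δ').map X.t).getLast hne :=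
      isPath_last (X := X) hpath (List.dropLast_append_getLast hne).symm
    have h2 : v ∈ (e :: δ').map X.t := h1 ▸ List.getLast_mem hne
    exact (List.nodup_cons.1 hnd).1 h2

lemma loops_decomp : ∀ (L : List (X.V × List X.E)), (∀ p ∈ L, X.IsPath p.1 p.1 p.2) →
    ∃ M : List (X.V × List X.E), (∀ p ∈ M, X.IsSimpleLoop p.1 p.2) ∧
      (∀ p ∈ M, ∀ e ∈ p.2, ∃ q ∈ L, e ∈ q.2) ∧
      ((M.map fun p => X.pathChain p.2)).sum = ((L.map fun p => X.pathChain p.2)).sum := by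
  intro L
  induction L with
  | nil => exact fun _ => ⟨[], by simp, by simp, rfl⟩
  | cons a L ih =>
    intro hL
    obtain ⟨M, hM, hMe, hMc⟩ := ih fun p hp => hL p (List.mem_cons_of_mem _ hp)
    obtain ⟨δ, Ma, hδ, hMa, hed, hedM, hchain⟩ :=
      loop_erasure (X := X) a.2.length a.2 a.1 a.1 le_rfl (hL a (List.mem_cons_self))
    have hδnil : δ = [] := isSimplePath_self_nil (X := X) hδ
    subst hδnil
    refine ⟨Ma ++ M, ?_, ?_, ?_⟩
    · intro p hp
      rcases List.mem_append.1 hp with h | h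
      exacts [hMa p h, hM p h]
    · intro p hp e he
      rcases List.mem_append.1 hp with h | h
      · exact ⟨a, List.mem_cons_self, hedM p h e he⟩
      · obtain ⟨q, hq, hq2⟩ := hMe p h e he
        exact ⟨q, List.mem_cons_of_mem _ hq, hq2⟩
    · simp only [List.map_append, List.sum_append, List.map_cons, List.sum_cons, hMc]
      rw [hchain, pathChain_nil, zero_add]

lemma sum_map_get {α : Type} {Mo : Type*} [AddCommMonoid Mo] (l : List α) (f : α → Mo) :
    ∑ i : Fin l.length, f (l.get i) = (l.map f).sum := by
  induction l with
  | nil => simp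
  | cons a l ih =>
    rw [List.map_cons, List.sum_cons, ← ih]
    exact Fin.sum_univ_succ _
end SunadaGraph


/-- Lemma: decomposition of path chains.  For any path `γ : x → y`
we can write `c_γ = c_δ + c_{σ₁} + ⋯ + c_{σₙ}` where `δ : x → y` is a simple path and
the `σᵢ` are simple loops, all of whose chains have support contained in `supp(c_γ)`. -/
theorem path_chain_decomposition (X : SunadaGraph) (x y : X.V) (γ : List X.E)
    (hγ : X.IsPath x y γ) :
    ∃ (n : ℕ) (δ : List X.E) (v : Fin n → X.V) (σ : Fin n → List X.E),
      X.IsSimplePath x y δ ∧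
      (∀ i, X.IsSimpleLoop (v i) (σ i)) ∧
      X.chainSupp (X.pathChain δ) ⊆ X.chainSupp (X.pathChain γ) ∧
      (∀ i, X.chainSupp (X.pathChain (σ i)) ⊆ X.chainSupp (X.pathChain γ)) ∧
      X.pathChain γ = X.pathChain δ + ∑ i, X.pathChain (σ i) := by
  classical
  obtain ⟨δ₀, L', hδ₀, hL', hCF, hchain0⟩ :=
    SunadaGraph.reduce (X := X) (x := x) (y := y) (γ.length) γ [] (by simp) hγ (by simp)
  simp only [List.map_nil, List.sum_nil, add_zero] at hchain0
  set all := δ₀ ++ (L'.map Prod.snd).flatten with hall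
  have hchain_all : X.pathChain all = X.pathChain γ := by
    rw [hall, SunadaGraph.pathChain_append, SunadaGraph.pathChain_flatten, List.map_map]
    rw [show (X.pathChain ∘ Prod.snd) = (fun p : X.V × List X.E => X.pathChain p.2) from rfl]
    exact hchain0
  have hsupp : ∀ e ∈ all, e ∈ X.chainSupp (X.pathChain γ) := by
    intro e he
    have h1 : X.inv e ∉ all := hCF e he
    have h2 := SunadaGraph.coeff_pos_of_mem (X := X) h1 he
    rw [hchain_all] at h2
    exact h2
  obtain ⟨δ, Mδ, hδs, hMδ, hedδ, hedMδ, hchainδ⟩ :=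
    SunadaGraph.loop_erasure (X := X) δ₀.length δ₀ x y le_rfl hδ₀
  obtain ⟨M₂, hM₂, hM₂e, hM₂c⟩ := SunadaGraph.loops_decomp (X := X) L' hL'
  set Ltot : List (X.V × List X.E) := Mδ ++ M₂ with hLtot
  have hLoopAll : ∀ p ∈ Ltot, X.IsSimpleLoop p.1 p.2 := by
    intro p hp
    rcases List.mem_append.1 hp with h | h
    exacts [hMδ p h, hM₂ p h]
  have hedAll : ∀ p ∈ Ltot, ∀ e ∈ p.2, e ∈ all := by
    intro p hp e he
    rcases List.mem_append.1 hp with h | h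
    · exact List.mem_append_left _ (hedMδ p h e he)
    · obtain ⟨q, hq, hq2⟩ := hM₂e p h e he
      exact List.mem_append_right _ ((SunadaGraph.mem_loops_iff X).2 ⟨q, hq, hq2⟩)
  refine ⟨Ltot.length, δ, fun i => (Ltot.get i).1, fun i => (Ltot.get i).2, hδs, ?_, ?_, ?_, ?_⟩
  · intro i
    exact hLoopAll _ (Ltot.get_mem i)
  · intro e hees
    have h1 : 0 < ((X.pathChain δ : X.E →₀ ℝ)) e := hees
    have h2 : e ∈ δ := by
      by_contra h3
      have := SunadaGraph.coeff_nonpos_of_not_mem (X := X) h3 (e := e)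
      linarith
    exact hsupp e (List.mem_append_left _ (hedδ e h2))
  · intro i e hees
    have h1 : 0 < ((X.pathChain (Ltot.get i).2 : X.E →₀ ℝ)) e := hees
    have h2 : e ∈ (Ltot.get i).2 := by
      by_contra h3
      have := SunadaGraph.coeff_nonpos_of_not_mem (X := X) h3 (e := e)
      linarith
    exact hsupp e (hedAll _ (Ltot.get_mem i) e h2)
  · rw [SunadaGraph.sum_map_get Ltot (fun p => X.pathChain p.2)]
    rw [← hchain0, hchainδ, ← hM₂c, hLtot]
    simp only [List.map_append, List.sum_append]
    abel
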